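/- Let ⟨·,·⟩ be a nondegenerate symmetric bilinear form on a countable-dimensional complex vector space V. An isotropic subspace M ⊆ V is maximal isotropic if and only if M is closed (M = M^⊥⊥) and dim(M^⊥/M) ≤ 1. -/

import Mathlib

/-- The perpendicular complement of a subspace of `V` with respect to a
bilinear form `B` on `V`. -/
def perp {V : Type*} [AddCommGroup V] [Module ℂ V]
    (B : V →ₗ[ℂ] V →ₗ[ℂ] ℂ) (F : Submodule ℂ V) : Submodule ℂ V where
  carrier := {y | ∀ x ∈ F, B x y = 0}
  add_mem' := by intro a b ha hb x hx; simp [map_add, ha x hx, hb x hx]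
  zero_mem' := by intro x hx; simp
  smul_mem' := by intro c a ha x hx; simp [ha x hx]

lemma mem_perp {V : Type*} [AddCommGroup V] [Module ℂ V]
    (B : V →ₗ[ℂ] V →ₗ[ℂ] ℂ) (F : Submodule ℂ V) (y : V) :
    y ∈ perp B F ↔ ∀ x ∈ F, B x y = 0 := Iff.rfl

lemma perp_antitone {V : Type*} [AddCommGroup V] [Module ℂ V]
    (B : V →ₗ[ℂ] V →ₗ[ℂ] ℂ) {F G : Submodule ℂ V} (h : F ≤ G) :
    perp B G ≤ perp B F := fun y hy x hx => hy x (h hx)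

/-- for a nondegenerate symmetric bilinear form on a
countable-dimensional complex vector space `V`, an isotropic subspace `M` is
maximal isotropic if and only if `M` is closed (`M = M^⊥⊥`) and
`dim (M^⊥ / M) ≤ 1`. -/
theorem maximal_isotropic_iff_closed_and_codim_le_one
    {V : Type*} [AddCommGroup V] [Module ℂ V]
    (hV : Module.rank ℂ V ≤ Cardinal.aleph0)
    (B : V →ₗ[ℂ] V →ₗ[ℂ] ℂ)
    (hB : ∀ x : V, (∀ y : V, B x y = 0) → x = 0)
    (hSym : ∀ x y : V, B x y = B y x)
    (M : Submodule ℂ V) (hM : M ≤ perp B M) :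
    (∀ N : Submodule ℂ V, N ≤ perp B N → M ≤ N → N = M) ↔
      (perp B (perp B M) = M ∧
        Module.rank ℂ (↥(perp B M) ⧸ (M.comap (perp B M).subtype)) ≤ 1) := by
  -- M ≤ M^⊥⊥
  have hMle : M ≤ perp B (perp B M) := by
    intro m hm x hx
    rw [hSym]
    exact hx m hm
  constructor
  · intro hmax
    -- Claim A: every isotropic vector of M^⊥ lies in M
    have claimA : ∀ v ∈ perp B M, B v v = 0 → v ∈ M := by
      intro v hv hvv
      have hiso : (M ⊔ Submodule.span ℂ {v}) ≤ perp B (M ⊔ Submodule.span ℂ {v}) := by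
        intro y hy x hx
        obtain ⟨m, hm, s, hs, rfl⟩ := Submodule.mem_sup.mp hy
        obtain ⟨m', hm', s', hs', rfl⟩ := Submodule.mem_sup.mp hx
        obtain ⟨c, rfl⟩ := Submodule.mem_span_singleton.mp hs
        obtain ⟨c', rfl⟩ := Submodule.mem_span_singleton.mp hs'
        have h1 : B m' m = 0 := (hM hm) m' hm'
        have h2 : B m' v = 0 := hv m' hm'
        have h3 : B v m = 0 := (hSym v m).trans (hv m hm)
        simp [map_add, map_smul, h1, h2, h3, hvv]
      have := hmax _ hiso le_sup_left
      rw [← this]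
      exact Submodule.mem_sup_right (Submodule.mem_span_singleton_self v)
    constructor
    · -- closedness
      refine hmax _ ?_ hMle
      intro y hy x hx
      exact hy x (perp_antitone B hM hx)
    · -- codimension ≤ 1
      rw [rank_le_one_iff]
      by_cases hex : ∀ x ∈ perp B M, x ∈ M
      · refine ⟨0, fun w => ⟨0, ?_⟩⟩
        obtain ⟨⟨y, hy⟩, rfl⟩ := Submodule.Quotient.mk_surjective _ w
        rw [zero_smul, eq_comm, Submodule.Quotient.mk_eq_zero]
        exact hex y hy
      · push_neg at hex
        obtain ⟨x, hx, hxM⟩ := hex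
        have hBxx : B x x ≠ 0 := fun h => hxM (claimA x hx h)
        refine ⟨Submodule.Quotient.mk ⟨x, hx⟩, fun w => ?_⟩
        obtain ⟨⟨y, hy⟩, rfl⟩ := Submodule.Quotient.mk_surjective _ w
        set c : ℂ := B x y / B x x with hc
        refine ⟨c, ?_⟩
        -- show y - c • x ∈ M
        have hz : y - c • x ∈ perp B M :=
          Submodule.sub_mem _ hy (Submodule.smul_mem _ _ hx)
        have hxz : B x (y - c • x) = 0 := by
          simp only [map_sub, map_smul, LinearMap.sub_apply, LinearMap.smul_apply,
            smul_eq_mul, hc]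
          field_simp
          simp
        have hzx : B (y - c • x) x = 0 := (hSym _ _).trans hxz
        have hzz : B (y - c • x) (y - c • x) = 0 := by
          by_contra hne
          obtain ⟨t, ht⟩ := IsAlgClosed.exists_pow_nat_eq
            (-(B x x) / B (y - c • x) (y - c • x)) (n := 2) (by norm_num)
          set z := y - c • x with hzdef
          have hw : x + t • z ∈ perp B M :=
            Submodule.add_mem _ hx (Submodule.smul_mem _ _ hz)
          have hww : B (x + t • z) (x + t • z) = 0 := by
            simp only [map_add, map_smul, LinearMap.add_apply, LinearMap.smul_apply,
              smul_eq_mul, hxz, hzx]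
            have : t ^ 2 * B z z = -(B x x) := by
              rw [ht]; field_simp
            ring_nf
            ring_nf at this
            linear_combination this
          have hwM : x + t • z ∈ M := claimA _ hw hww
          have h0 : B (x + t • z) x = 0 := hx _ hwM
          rw [map_add, map_smul, LinearMap.add_apply, LinearMap.smul_apply, hzx,
            smul_eq_mul, mul_zero, add_zero] at h0
          exact hBxx h0
        have hzM : y - c • x ∈ M := claimA _ hz hzz
        rw [← Submodule.Quotient.mk_smul, Submodule.Quotient.eq, Submodule.mem_comap]
        simpa [neg_sub] using M.neg_mem hzM
  · rintro ⟨hclosed, hrank⟩ N hN hMN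
    by_cases hNM : N ≤ M
    · exact le_antisymm hNM hMN
    · obtain ⟨v, hvN, hvM⟩ := SetLike.exists_of_lt (lt_of_le_of_ne hMN (fun h => hNM h.ge))
      exfalso
      have hNperp : N ≤ perp B M := hN.trans (perp_antitone B hMN)
      obtain ⟨v₀, hv₀⟩ := rank_le_one_iff.mp hrank
      obtain ⟨r, hr⟩ := hv₀ (Submodule.Quotient.mk ⟨v, hNperp hvN⟩)
      have hmkv : (Submodule.Quotient.mk ⟨v, hNperp hvN⟩ :
          ↥(perp B M) ⧸ (M.comap (perp B M).subtype)) ≠ 0 := by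
        rw [Ne, Submodule.Quotient.mk_eq_zero, Submodule.mem_comap]
        exact hvM
      have hr0 : r ≠ 0 := by
        rintro rfl
        rw [zero_smul] at hr
        exact hmkv hr.symm
      -- perp B M ≤ N
      have hperpN : perp B M ≤ N := by
        intro y hy
        obtain ⟨s, hs⟩ := hv₀ (Submodule.Quotient.mk ⟨y, hy⟩)
        have : Submodule.Quotient.mk (p := M.comap (perp B M).subtype) ⟨y, hy⟩
            = (s * r⁻¹) • Submodule.Quotient.mk ⟨v, hNperp hvN⟩ := by
          rw [← hr, ← hs, smul_smul]
          congr 1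
          field_simp
        rw [← Submodule.Quotient.mk_smul, eq_comm, Submodule.Quotient.eq,
          Submodule.mem_comap] at this
        have hyv : (s * r⁻¹) • v - y ∈ M := this
        have : y = -((s * r⁻¹) • v - y) + (s * r⁻¹) • v := by
          rw [neg_sub, sub_add_cancel]
        rw [this]
        exact N.add_mem (N.neg_mem (hMN hyv)) (N.smul_mem _ hvN)
      have hNeq : N = perp B M := le_antisymm hNperp hperpN
      have : N ≤ M := by
        calc N ≤ perp B N := hN
        _ = perp B (perp B M) := by rw [hNeq]
        _ = M := hclosed
      exact hvM (this hvN)
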